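/- Every FM model output can be realized by a SAM2_A model: for any embeddings f_1,…,f_n ∈ ℝ^d, there exist weight vectors W_{i,j} ∈ ℝ^d and a linear map M : ℝ^{n·n·d} → ℝ such that M applied to the concatenation of the blocks ⟨f_i, f_j⟩·W_{i,j} equals Σ_{i<j} ⟨f_i, f_j⟩. In particular, choosing W_{i,j} = e_1 for i<j and W_{i,j} = 0 otherwise, with M summing the first coordinate of each block, suffices. -/

import Mathlib

theorem sam2A_realizes_fm (n d : ℕ) (hd : 1 ≤ d) (f : Fin n → EuclideanSpace ℝ (Fin d)) :
    ∃ (W : Fin n → Fin n → EuclideanSpace ℝ (Fin d))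
      (M : (Fin n → Fin n → EuclideanSpace ℝ (Fin d)) →ₗ[ℝ] ℝ),
      M (fun i j => (inner ℝ (f i) (f j) : ℝ) • W i j)
        = ∑ i, ∑ j, if i < j then (inner ℝ (f i) (f j) : ℝ) else 0 := by
  have h0 : (0 : ℕ) < d := hd
  refine ⟨fun i j => if i < j then WithLp.toLp 2 (fun k => if k = ⟨0, h0⟩ then 1 else 0) else 0,
    { toFun := fun X => ∑ i, ∑ j, X i j ⟨0, h0⟩
      map_add' := by intro x y; simp [Finset.sum_add_distrib]
      map_smul' := by intro c x; simp [Finset.mul_sum] }, ?_⟩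
  simp only [LinearMap.coe_mk, AddHom.coe_mk]
  refine Finset.sum_congr rfl fun i _ => Finset.sum_congr rfl fun j _ => ?_
  by_cases h : i < j <;> simp [h, PiLp.smul_apply, EuclideanSpace]
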